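/- For scalar linear-Gaussian systems, the steady-state Kalman predicted variance Σ satisfying the Riccati fixed-point Σ = A²(Σ − Σ C² (C²Σ + R)⁻¹ Σ) + Q is strictly decreasing in the squared sensor gain C² (for Σ, Q, R, A² > 0): i.e., the map C² ↦ Σ(C²) defined implicitly by the fixed-point equation is monotone decreasing. -/

import Mathlib

/-- The scalar steady-state Kalman predicted variance is strictly decreasing in
the squared sensor gain: if `0 < c₁ < c₂` and `Σᵢ > 0` solves the Riccati
fixed point `Σ = A² Σ R / (cᵢ Σ + R) + Q`, then `Σ₂ < Σ₁`. -/
theorem riccati_fixed_point_decreasing_in_gain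
    (A Q R c₁ c₂ S₁ S₂ : ℝ)
    (hA : A ≠ 0) (hQ : 0 < Q) (hR : 0 < R)
    (hc₁ : 0 < c₁) (hc : c₁ < c₂)
    (hS₁pos : 0 < S₁) (hS₂pos : 0 < S₂)
    (hfix₁ : S₁ = A ^ 2 * S₁ * R / (c₁ * S₁ + R) + Q)
    (hfix₂ : S₂ = A ^ 2 * S₂ * R / (c₂ * S₂ + R) + Q) :
    S₂ < S₁ := by
  have hd₁ : c₁ * S₁ + R > 0 := by positivity
  have hd₂ : c₂ * S₂ + R > 0 := by nlinarith
  have e₁ : S₁ * (c₁ * S₁ + R) = A ^ 2 * S₁ * R + Q * (c₁ * S₁ + R) := by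
    field_simp at hfix₁; nlinarith [hfix₁]
  have e₂ : S₂ * (c₂ * S₂ + R) = A ^ 2 * S₂ * R + Q * (c₂ * S₂ + R) := by
    have h := hfix₂; rw [div_add' _ _ _ hd₂.ne', eq_div_iff hd₂.ne'] at h; linarith [h]
  have hSQ : Q < S₁ := by
    have : 0 < A ^ 2 * S₁ * R / (c₁ * S₁ + R) := by positivity
    linarith [hfix₁]
  by_contra h
  push_neg at h
  have key : S₁*S₂*(c₂*S₂ - c₁*S₁) - (c₂-c₁)*Q*S₁*S₂ - Q*R*(S₁-S₂) = 0 := by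
    linear_combination S₁ * e₂ - S₂ * e₁
  nlinarith [mul_pos (mul_pos hS₁pos hS₂pos) (mul_pos (sub_pos.mpr hc) (sub_pos.mpr hSQ)),
    mul_pos (mul_pos hQ hR) hS₁pos, mul_nonneg (mul_pos (mul_pos hc₁ hS₁pos) hS₂pos).le (sub_nonneg.mpr h),
    mul_nonneg (mul_pos hQ hR).le (sub_nonneg.mpr h)]
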